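/- For every positive integer d there exists a constant c_d ≥ 2 such that for every complex Hilbert space H and every d-tuple T = (T₁, …, T_d) of bounded linear operators on H, ρ(T) ≤ c_d · ω(T), where ρ is the Toeplitz modulus and ω is the Toeplitz numerical radius. -/

import Mathlib

open scoped ComplexOrder

noncomputable section

variable {H : Type*} [NormedAddCommGroup H] [InnerProductSpace ℂ H] [CompleteSpace H]

/-- The `(i, j)` entry of the `(d+1) × (d+1)` block Toeplitz operator matrix associated to a
`d`-tuple `T` of bounded operators on `H`, with diagonal entries `α • 1`: it is `α • 1` if
`i = j`, `T_{i-j}` if `i > j`, and `(T_{j-i})*` if `i < j`. -/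
def tEntry {d : ℕ} (T : Fin d → H →L[ℂ] H) (α : ℂ) (i j : Fin (d + 1)) : H →L[ℂ] H :=
  if _h1 : (i : ℕ) = (j : ℕ) then α • (1 : H →L[ℂ] H)
  else if _h2 : (j : ℕ) < (i : ℕ) then
    T ⟨(i : ℕ) - (j : ℕ) - 1, by have := i.isLt; omega⟩
  else
    ContinuousLinearMap.adjoint (T ⟨(j : ℕ) - (i : ℕ) - 1, by have := j.isLt; omega⟩)

/-- Positivity of a block operator matrix `M`, expressed through its quadratic form on the
direct sum of copies of `H`: for every vector `x = (x_i)`, `∑ i j, ⟪M i j (x j), x i⟫ ≥ 0`. -/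
def IsPosBlockMatrix {ι : Type*} [Fintype ι] (M : ι → ι → (H →L[ℂ] H)) : Prop :=
  ∀ x : ι → H, 0 ≤ ∑ i, ∑ j, (inner ℂ (M i j (x j)) (x i) : ℂ)

/-- A `d`-tuple of operators is Toeplitz-contractive if its block Toeplitz operator matrix
(with 1's on the diagonal) is a positive operator on `⊕_1^{d+1} H`. -/
def ToeplitzContractive {d : ℕ} (T : Fin d → H →L[ℂ] H) : Prop :=
  IsPosBlockMatrix (tEntry T 1)

/-- The Toeplitz modulus `ρ(T)` of a `d`-tuple `T`: the infimum of the `α ∈ ℝ₊` for which the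
block Toeplitz operator matrix `𝒯_α` (with `α • 1` on the diagonal) is positive. -/
def toeplitzModulus {d : ℕ} (T : Fin d → H →L[ℂ] H) : ℝ :=
  sInf {α : ℝ | 0 ≤ α ∧ IsPosBlockMatrix (tEntry T (α : ℂ))}

/-- The scalar `(d+1) × (d+1)` Toeplitz matrix `𝒯_{α,ξ}` obtained from the block Toeplitz
matrix of `T` by applying the vector state `X ↦ ⟨Xξ, ξ⟩` entrywise; for a unit vector `ξ`
its diagonal entries are `α`, its `(i,j)` entry for `i > j` is `⟨T_{i-j} ξ, ξ⟩`, and its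
`(i,j)` entry for `i < j` is `⟨(T_{j-i})* ξ, ξ⟩`. -/
def tScalarMatrix {d : ℕ} (T : Fin d → H →L[ℂ] H) (α : ℝ) (ξ : H) :
    Matrix (Fin (d + 1)) (Fin (d + 1)) ℂ :=
  Matrix.of fun i j => (inner ℂ ξ (tEntry T (α : ℂ) i j ξ) : ℂ)

/-- The Toeplitz numerical radius `ω(T)` of a `d`-tuple `T`: the infimum of the `α ∈ ℝ₊` for
which the scalar Toeplitz matrix `𝒯_{α,ξ}` is positive semidefinite for every unit vector `ξ`. -/
def toeplitzNumRadius {d : ℕ} (T : Fin d → H →L[ℂ] H) : ℝ :=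
  sInf {α : ℝ | 0 ≤ α ∧ ∀ ξ : H, ‖ξ‖ = 1 → (tScalarMatrix T α ξ).PosSemidef}

lemma tEntry_adjoint {d : ℕ} (T : Fin d → H →L[ℂ] H) (α : ℝ) (i j : Fin (d + 1)) :
    tEntry T (α : ℂ) j i = ContinuousLinearMap.adjoint (tEntry T (α : ℂ) i j) := by
  unfold tEntry
  rcases lt_trichotomy (i : ℕ) (j : ℕ) with h | h | h
  · rw [dif_neg (by omega), dif_pos h, dif_neg (by omega), dif_neg (by omega),
      ContinuousLinearMap.adjoint_adjoint]
  · rw [dif_pos h.symm, dif_pos h, ← ContinuousLinearMap.star_eq_adjoint, star_smul, star_one,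
      Complex.star_def, Complex.conj_ofReal]
  · rw [dif_neg (by omega), dif_neg (by omega), dif_neg (by omega), dif_pos h]

lemma abs_sub_add {a b : ℂ} : ‖(a - b)‖ ≤ ‖a‖ + ‖b‖ := by
  simpa [sub_eq_add_neg] using norm_add_le a (-b)

lemma abs_inner_le_of_diag {K : ℝ} (A : H →L[ℂ] H)
    (h : ∀ w : H, ‖(inner ℂ (A w) w : ℂ)‖ ≤ K * ‖w‖ ^ 2) (u v : H) :
    ‖(inner ℂ (A u) v : ℂ)‖ ≤ K * (‖u‖ ^ 2 + ‖v‖ ^ 2) := by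
  have key := inner_map_polarization (A : H →ₗ[ℂ] H) v u
  simp only [ContinuousLinearMap.coe_coe] at key
  have par1 : ‖v + u‖ ^ 2 + ‖v - u‖ ^ 2 = 2 * (‖v‖ ^ 2 + ‖u‖ ^ 2) :=
    by simpa [pow_two] using parallelogram_law_with_norm ℂ v u
  have par2 : ‖v + Complex.I • u‖ ^ 2 + ‖v - Complex.I • u‖ ^ 2 = 2 * (‖v‖ ^ 2 + ‖u‖ ^ 2) := by
    have := parallelogram_law_with_norm ℂ v (Complex.I • u)
    rw [norm_smul, Complex.norm_I, one_mul] at this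
    simpa [pow_two] using this
  have h1 := h (v + u)
  have h2 := h (v - u)
  have h3 := h (v + Complex.I • u)
  have h4 := h (v - Complex.I • u)
  rw [key]
  rw [norm_div]
  have habs4 : ‖(4:ℂ)‖ = 4 := by norm_num
  rw [habs4]
  rw [div_le_iff₀ (by norm_num : (0:ℝ) < 4)]
  calc ‖(inner ℂ (A (v + u)) (v + u) - inner ℂ (A (v - u)) (v - u) +
          Complex.I * inner ℂ (A (v + Complex.I • u)) (v + Complex.I • u) -
          Complex.I * inner ℂ (A (v - Complex.I • u)) (v - Complex.I • u))‖
      ≤ ‖(inner ℂ (A (v + u)) (v + u) - inner ℂ (A (v - u)) (v - u) +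
          Complex.I * inner ℂ (A (v + Complex.I • u)) (v + Complex.I • u))‖ +
          ‖(Complex.I * (inner ℂ (A (v - Complex.I • u)) (v - Complex.I • u) : ℂ))‖ :=
        abs_sub_add
    _ ≤ ‖((inner ℂ (A (v + u)) (v + u) : ℂ) - inner ℂ (A (v - u)) (v - u))‖ +
          ‖(Complex.I * (inner ℂ (A (v + Complex.I • u)) (v + Complex.I • u) : ℂ))‖ +
          ‖(Complex.I * (inner ℂ (A (v - Complex.I • u)) (v - Complex.I • u) : ℂ))‖ := by
        gcongr; exact norm_add_le _ _
    _ ≤ ‖(inner ℂ (A (v + u)) (v + u) : ℂ)‖ +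
          ‖(inner ℂ (A (v - u)) (v - u) : ℂ)‖ +
          ‖(Complex.I * (inner ℂ (A (v + Complex.I • u)) (v + Complex.I • u) : ℂ))‖ +
          ‖(Complex.I * (inner ℂ (A (v - Complex.I • u)) (v - Complex.I • u) : ℂ))‖ := by
        gcongr; exact abs_sub_add
    _ = ‖(inner ℂ (A (v + u)) (v + u) : ℂ)‖ +
          ‖(inner ℂ (A (v - u)) (v - u) : ℂ)‖ +
          ‖(inner ℂ (A (v + Complex.I • u)) (v + Complex.I • u) : ℂ)‖ +
          ‖(inner ℂ (A (v - Complex.I • u)) (v - Complex.I • u) : ℂ)‖ := by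
        simp [map_mul]
    _ ≤ K * ‖v + u‖ ^ 2 + K * ‖v - u‖ ^ 2 + K * ‖v + Complex.I • u‖ ^ 2 +
          K * ‖v - Complex.I • u‖ ^ 2 :=
        add_le_add (add_le_add (add_le_add h1 h2) h3) h4
    _ = K * (‖u‖ ^ 2 + ‖v‖ ^ 2) * 4 := by linear_combination K * par1 + K * par2

lemma diag_bound_of_unit {K : ℝ} (A : H →L[ℂ] H)
    (h : ∀ ξ : H, ‖ξ‖ = 1 → ‖(inner ℂ (A ξ) ξ : ℂ)‖ ≤ K) (w : H) :
    ‖(inner ℂ (A w) w : ℂ)‖ ≤ K * ‖w‖ ^ 2 := by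
  rcases eq_or_ne w 0 with rfl | hw
  · simp
  · have hn : (0:ℝ) < ‖w‖ := norm_pos_iff.2 hw
    set c : ℂ := ((‖w‖⁻¹ : ℝ) : ℂ) with hc
    have hξ : ‖c • w‖ = 1 := by
      rw [norm_smul, hc, Complex.norm_real, Real.norm_eq_abs, abs_of_nonneg (by positivity),
        inv_mul_cancel₀ hn.ne']
    have h1 := h (c • w) hξ
    rw [map_smul, inner_smul_left, inner_smul_right, norm_mul, norm_mul] at h1
    rw [Complex.norm_conj] at h1
    have hcabs : ‖c‖ = ‖w‖⁻¹ := by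
      rw [hc, Complex.norm_real, Real.norm_eq_abs, abs_of_nonneg (by positivity)]
    rw [hcabs] at h1
    have h2 : ‖w‖⁻¹ * (‖w‖⁻¹ * ‖(inner ℂ (A w) w : ℂ)‖) ≤ K := h1
    have := mul_le_mul_of_nonneg_left h2 (le_of_lt (by positivity : (0:ℝ) < ‖w‖ ^ 2))
    calc ‖(inner ℂ (A w) w : ℂ)‖
        = ‖w‖ ^ 2 * (‖w‖⁻¹ * (‖w‖⁻¹ * ‖(inner ℂ (A w) w : ℂ)‖)) := by
          field_simp
      _ ≤ ‖w‖ ^ 2 * K := this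
      _ = K * ‖w‖ ^ 2 := by ring

lemma tEntry_offdiag_bound {d : ℕ} (T : Fin d → H →L[ℂ] H) {K : ℝ} (α : ℂ)
    (h : ∀ (k : Fin d) (u v : H), ‖(inner ℂ (T k u) v : ℂ)‖ ≤ K * (‖u‖ ^ 2 + ‖v‖ ^ 2))
    {i j : Fin (d + 1)} (hij : (i : ℕ) ≠ (j : ℕ)) (u v : H) :
    ‖(inner ℂ (tEntry T α i j u) v : ℂ)‖ ≤ K * (‖u‖ ^ 2 + ‖v‖ ^ 2) := by
  unfold tEntry
  rcases lt_or_gt_of_ne hij with hlt | hgt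
  · rw [dif_neg hij, dif_neg (by omega)]
    have : (inner ℂ (ContinuousLinearMap.adjoint
        (T ⟨(j : ℕ) - (i : ℕ) - 1, by have := j.isLt; omega⟩) u) v : ℂ)
        = inner ℂ u (T ⟨(j : ℕ) - (i : ℕ) - 1, by have := j.isLt; omega⟩ v) :=
      ContinuousLinearMap.adjoint_inner_left _ _ _
    rw [this, ← inner_conj_symm, Complex.norm_conj]
    calc ‖(inner ℂ (T _ v) u : ℂ)‖ ≤ K * (‖v‖ ^ 2 + ‖u‖ ^ 2) := h _ v u
      _ = K * (‖u‖ ^ 2 + ‖v‖ ^ 2) := by ring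
  · rw [dif_neg hij, dif_pos hgt]
    exact h _ u v

lemma isPosBlockMatrix_of_bound {d : ℕ} (T : Fin d → H →L[ℂ] H) {K : ℝ} (hK : 0 ≤ K)
    (h : ∀ (k : Fin d) (u v : H), ‖(inner ℂ (T k u) v : ℂ)‖ ≤ K * (‖u‖ ^ 2 + ‖v‖ ^ 2)) :
    IsPosBlockMatrix (tEntry T ((2 * d * K : ℝ) : ℂ)) := by
  intro x
  set α : ℝ := 2 * d * K with hα
  set S := ∑ i, ∑ j, (inner ℂ (tEntry T (α : ℂ) i j (x j)) (x i) : ℂ) with hS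
  have hconj : (starRingEnd ℂ) S = S := by
    rw [hS, map_sum]
    have : ∀ i : Fin (d + 1), (starRingEnd ℂ) (∑ j, (inner ℂ (tEntry T (α : ℂ) i j (x j)) (x i) : ℂ))
        = ∑ j, (inner ℂ (tEntry T (α : ℂ) j i (x i)) (x j) : ℂ) := by
      intro i
      rw [map_sum]
      refine Finset.sum_congr rfl fun j _ => ?_
      rw [inner_conj_symm, tEntry_adjoint T α i j, ContinuousLinearMap.adjoint_inner_left]
    simp_rw [this]
    exact Finset.sum_comm
  have him : S.im = 0 := Complex.conj_eq_iff_im.mp hconj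
  have hre : 0 ≤ S.re := by
    have hSre : S.re = ∑ i, ∑ j, (inner ℂ (tEntry T (α : ℂ) i j (x j)) (x i) : ℂ).re := by
      rw [hS, Complex.re_sum]
      exact Finset.sum_congr rfl fun i _ => Complex.re_sum _ _
    set a : Fin (d + 1) → ℝ := fun i => ‖x i‖ ^ 2 with ha
    set g : Fin (d + 1) → Fin (d + 1) → ℝ :=
      fun i j => (-K) * (a j + a i) + (if i = j then α * a i + 2 * K * a i else 0) with hg
    have hterm : ∀ i j, g i j ≤ (inner ℂ (tEntry T (α : ℂ) i j (x j)) (x i) : ℂ).re := by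
      intro i j
      rcases eq_or_ne i j with rfl | hij
      · have hE : tEntry T (α : ℂ) i i = (α : ℂ) • 1 := by unfold tEntry; rw [dif_pos rfl]
        have hval : (inner ℂ (tEntry T (α : ℂ) i i (x i)) (x i) : ℂ).re = α * a i := by
          rw [hE]
          simp only [ContinuousLinearMap.smul_apply, ContinuousLinearMap.one_apply,
            inner_smul_left, inner_self_eq_norm_sq_to_K, Complex.conj_ofReal]
          norm_cast
          simp [Complex.mul_re, ← Complex.ofReal_pow, ha]
        rw [hval, hg]
        simp only [eq_self_iff_true, if_true]
        linarith
      · have hb := tEntry_offdiag_bound T (α : ℂ) h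
          (fun hc => hij (Fin.ext hc)) (x j) (x i)
        have h3 := Complex.abs_re_le_norm (inner ℂ (tEntry T (α : ℂ) i j (x j)) (x i) : ℂ)
        have h5 := neg_abs_le (inner ℂ (tEntry T (α : ℂ) i j (x j)) (x i) : ℂ).re
        rw [hg]
        simp only [if_neg hij, add_zero]
        have : |(inner ℂ (tEntry T (α : ℂ) i j (x j)) (x i) : ℂ).re| ≤ K * (a j + a i) := by
          rw [ha]; exact le_trans h3 hb
        linarith
    have hgsum : ∑ i, ∑ j, g i j = 0 := by
      have hinner : ∀ i : Fin (d + 1), ∑ j, g i j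
          = (-K) * ((∑ j, a j) + ((d : ℝ) + 1) * a i) + (α * a i + 2 * K * a i) := by
        intro i
        rw [hg]
        rw [Finset.sum_add_distrib, ← Finset.mul_sum, Finset.sum_add_distrib,
          Finset.sum_const, Finset.card_univ, Fintype.card_fin, nsmul_eq_mul]
        congr 2
        · push_cast; ring
        · rw [Finset.sum_ite_eq Finset.univ i (fun _ => α * a i + 2 * K * a i)]
          simp
      simp_rw [hinner]
      rw [Finset.sum_add_distrib, ← Finset.mul_sum, Finset.sum_add_distrib,
        Finset.sum_const, Finset.card_univ, Fintype.card_fin, nsmul_eq_mul,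
        ← Finset.mul_sum, Finset.sum_add_distrib, ← Finset.mul_sum, ← Finset.mul_sum]
      rw [hα]
      push_cast
      ring
    calc (0:ℝ) = ∑ i, ∑ j, g i j := hgsum.symm
      _ ≤ ∑ i, ∑ j, (inner ℂ (tEntry T (α : ℂ) i j (x j)) (x i) : ℂ).re :=
          Finset.sum_le_sum fun i _ => Finset.sum_le_sum fun j _ => hterm i j
      _ = S.re := hSre.symm
  rw [Complex.le_def]
  exact ⟨by simpa using hre, by simpa using him.symm⟩

lemma tScalarMatrix_diag {d : ℕ} (T : Fin d → H →L[ℂ] H) (α : ℝ) {ξ : H} (hξ : ‖ξ‖ = 1)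
    (i : Fin (d + 1)) : tScalarMatrix T α ξ i i = (α : ℂ) := by
  have hE : tEntry T (α : ℂ) i i = (α : ℂ) • 1 := by unfold tEntry; rw [dif_pos rfl]
  simp only [tScalarMatrix, Matrix.of_apply, hE, ContinuousLinearMap.smul_apply,
    ContinuousLinearMap.one_apply]
  rw [inner_smul_right, inner_self_eq_norm_sq_to_K, hξ]
  simp

lemma abs_inner_T_le {d : ℕ} (T : Fin d → H →L[ℂ] H) {α : ℝ} {ξ : H}
    (hpos : (tScalarMatrix T α ξ).PosSemidef) (hξ : ‖ξ‖ = 1) (k : Fin d) :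
    ‖(inner ℂ (T k ξ) ξ : ℂ)‖ ≤ α := by
  set M := tScalarMatrix T α ξ with hM
  set z : ℂ := inner ℂ (T k ξ) ξ with hz
  set i₁ : Fin (d + 1) := k.succ with hi₁
  have hms : ∀ (j : Fin (d + 1)) (y : ℂ), M.mulVec (Pi.single j y) = fun i => M i j * y :=
    fun j y => funext fun _ => dotProduct_single _ _ _
  have hα : (0:ℝ) ≤ α := by
    have h0 := hpos.dotProduct_mulVec_nonneg (Pi.single 0 1)
    rw [hms] at h0
    have he : dotProduct (star (Pi.single (0 : Fin (d+1)) (1:ℂ)))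
        (fun i => M i 0 * 1) = (α : ℂ) := by
      rw [← Pi.single_star, star_one, single_dotProduct, one_mul, mul_one,
        hM, tScalarMatrix_diag T α hξ 0]
    rw [he] at h0
    exact Complex.zero_le_real.mp h0
  rcases eq_or_ne z 0 with hz0 | hz0
  · rw [hz0]; simpa using hα
  have hM10 : M i₁ 0 = (starRingEnd ℂ) z := by
    have hE : tEntry T (α : ℂ) i₁ 0 = T k := by
      unfold tEntry
      rw [dif_neg (by simp [hi₁, Fin.val_succ]), dif_pos (by simp [hi₁, Fin.val_succ])]
      congr 1
    rw [hM]
    simp only [tScalarMatrix, Matrix.of_apply, hE]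
    rw [hz, ← inner_conj_symm]
  have hM01 : M 0 i₁ = z := by
    have hE : tEntry T (α : ℂ) 0 i₁ = ContinuousLinearMap.adjoint (T k) := by
      unfold tEntry
      rw [dif_neg (by simp [hi₁, Fin.val_succ]), dif_neg (by simp [hi₁, Fin.val_succ])]
      congr 1
    rw [hM]
    simp only [tScalarMatrix, Matrix.of_apply, hE]
    rw [ContinuousLinearMap.adjoint_inner_right, hz]
  set A : ℂ := ((‖z‖ : ℝ) : ℂ) with hA
  have hzabs : A ≠ 0 := by
    rw [hA]
    simpa using (norm_ne_zero_iff.mpr hz0)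
  have habs : (starRingEnd ℂ) z * z = A ^ 2 := by
    rw [mul_comm, Complex.mul_conj, Complex.normSq_eq_norm_sq, hA]
    push_cast
    ring
  have hdiv : A ^ 2 / A = A := by
    rw [sq, mul_div_assoc, div_self hzabs, mul_one]
  set c : ℂ := -(z / A) with hc
  have hcz : (starRingEnd ℂ) c * z = -A := by
    have hAc : (starRingEnd ℂ) A = A := by rw [hA, Complex.conj_ofReal]
    rw [hc, map_neg, map_div₀, hAc, neg_mul, div_mul_eq_mul_div, habs, hdiv]
  have hzc : (starRingEnd ℂ) z * c = -A := by
    rw [hc, mul_neg, ← mul_div_assoc, habs, hdiv]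
  have hcc : (starRingEnd ℂ) c * c = 1 := by
    have hAc : (starRingEnd ℂ) A = A := by rw [hA, Complex.conj_ofReal]
    rw [hc, map_neg, mul_neg, neg_mul, neg_neg, map_div₀, hAc, div_mul_div_comm, habs, ← sq,
      div_self (pow_ne_zero 2 hzabs)]
  set x : Fin (d + 1) → ℂ := Pi.single 0 c + Pi.single i₁ 1 with hx
  have hq := hpos.dotProduct_mulVec_nonneg x
  have hQ : dotProduct (star x) (M.mulVec x) = ((2 * α - 2 * ‖z‖ : ℝ) : ℂ) := by
    rw [hx, star_add, ← Pi.single_star, ← Pi.single_star, star_one, Matrix.mulVec_add,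
      hms, hms, add_dotProduct,
      single_dotProduct, single_dotProduct]
    simp only [Pi.add_apply, mul_one, one_mul]
    rw [hM, tScalarMatrix_diag T α hξ 0, tScalarMatrix_diag T α hξ i₁, ← hM, hM10, hM01,
      Complex.star_def]
    have expand : (starRingEnd ℂ) c * ((α:ℂ) * c + z) + ((starRingEnd ℂ) z * c + (α:ℂ))
        = (α:ℂ) * ((starRingEnd ℂ) c * c) + (starRingEnd ℂ) c * z + (starRingEnd ℂ) z * c
          + (α:ℂ) := by ring
    rw [expand, hcc, hcz, hzc, hA]
    push_cast
    ring
  rw [hQ] at hq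
  have := Complex.zero_le_real.mp hq
  linarith

lemma nonneg_conj_eq_self {w : ℂ} (hw : 0 ≤ w) : (starRingEnd ℂ) w = w := by
  rw [Complex.conj_eq_iff_im]
  exact ((Complex.le_def.mp hw).2).symm

lemma posSemidef_of_block {d : ℕ} (T : Fin d → H →L[ℂ] H) {α : ℝ}
    (h : IsPosBlockMatrix (tEntry T (α : ℂ))) (ξ : H) :
    (tScalarMatrix T α ξ).PosSemidef := by
  refine Matrix.PosSemidef.of_dotProduct_mulVec_nonneg ?_ ?_
  · rw [Matrix.IsHermitian]
    ext i j
    rw [Matrix.conjTranspose_apply]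
    simp only [tScalarMatrix, Matrix.of_apply]
    rw [Complex.star_def, inner_conj_symm, tEntry_adjoint T α i j,
      ContinuousLinearMap.adjoint_inner_left]
  · intro c
    have hb := h (fun i => c i • ξ)
    have hQ : dotProduct (star c) ((tScalarMatrix T α ξ).mulVec c)
        = (starRingEnd ℂ) (∑ i, ∑ j, (inner ℂ (tEntry T (α:ℂ) i j (c j • ξ)) (c i • ξ) : ℂ)) := by
      rw [map_sum, dotProduct]
      refine Finset.sum_congr rfl fun i _ => ?_
      rw [map_sum, Matrix.mulVec, dotProduct, Finset.mul_sum]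
      refine Finset.sum_congr rfl fun j _ => ?_
      rw [ContinuousLinearMap.map_smul, inner_smul_left, inner_smul_right, map_mul, map_mul,
        Complex.conj_conj, inner_conj_symm]
      simp only [tScalarMatrix, Matrix.of_apply, Pi.star_apply]
      rw [Complex.star_def]
      ring
    rw [hQ, nonneg_conj_eq_self hb]
    exact hb

/-- for every positive integer `d` there is a constant `c_d ≥ 2` such that
`ρ(T) ≤ c_d ω(T)` for every `d`-tuple `T` of bounded operators on any complex Hilbert space. -/
theorem exists_const_toeplitzModulus_le_mul_toeplitzNumRadius
    (d : ℕ) (hd : 0 < d) :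
    ∃ c : ℝ, 2 ≤ c ∧
      ∀ (H' : Type) [NormedAddCommGroup H'] [InnerProductSpace ℂ H'] [CompleteSpace H']
        (T : Fin d → H' →L[ℂ] H'),
        toeplitzModulus T ≤ c * toeplitzNumRadius T := by
  refine ⟨2 * d, ?_, ?_⟩
  · have : (1:ℝ) ≤ d := by exact_mod_cast hd
    linarith
  intro H' _ _ _ T
  set K₀ : ℝ := ∑ k, ‖T k‖ with hK₀
  have hK₀0 : 0 ≤ K₀ := Finset.sum_nonneg fun k _ => norm_nonneg _
  have hbound0 : ∀ (k : Fin d) (u v : H'),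
      ‖(inner ℂ (T k u) v : ℂ)‖ ≤ K₀ * (‖u‖ ^ 2 + ‖v‖ ^ 2) := by
    intro k u v
    have h1 : ‖(inner ℂ (T k u) v : ℂ)‖ ≤ ‖T k u‖ * ‖v‖ := by
      exact norm_inner_le_norm _ _
    have h2 : ‖T k u‖ ≤ ‖T k‖ * ‖u‖ := (T k).le_opNorm u
    have h3 : ‖T k‖ ≤ K₀ :=
      Finset.single_le_sum (fun k _ => norm_nonneg (T k)) (Finset.mem_univ k)
    nlinarith [norm_nonneg u, norm_nonneg v, norm_nonneg (T k u), norm_nonneg (T k),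
      sq_nonneg (‖u‖ - ‖v‖), sq_nonneg ‖u‖, sq_nonneg ‖v‖]
  have hblock0 := isPosBlockMatrix_of_bound T hK₀0 hbound0
  have hne : {α : ℝ | 0 ≤ α ∧ ∀ ξ : H', ‖ξ‖ = 1 → (tScalarMatrix T α ξ).PosSemidef}.Nonempty :=
    ⟨2 * d * K₀, ⟨by positivity, fun ξ _ => posSemidef_of_block T hblock0 ξ⟩⟩
  have hω0 : 0 ≤ toeplitzNumRadius T := Real.sInf_nonneg fun x hx => hx.1
  set ω := toeplitzNumRadius T with hω
  have hkey : ∀ (k : Fin d) (ξ : H'), ‖ξ‖ = 1 → ‖(inner ℂ (T k ξ) ξ : ℂ)‖ ≤ ω := by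
    intro k ξ hξ
    rw [hω, toeplitzNumRadius]
    exact le_csInf hne fun b hb => abs_inner_T_le T (hb.2 ξ hξ) hξ k
  have hbound : ∀ (k : Fin d) (u v : H'),
      ‖(inner ℂ (T k u) v : ℂ)‖ ≤ ω * (‖u‖ ^ 2 + ‖v‖ ^ 2) :=
    fun k => abs_inner_le_of_diag (T k) (diag_bound_of_unit (T k) (hkey k))
  have hblock := isPosBlockMatrix_of_bound T hω0 hbound
  have hmem : (2 * (d:ℝ) * ω) ∈ {α : ℝ | 0 ≤ α ∧ IsPosBlockMatrix (tEntry T (α : ℂ))} :=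
    ⟨by positivity, hblock⟩
  have hbdd : BddBelow {α : ℝ | 0 ≤ α ∧ IsPosBlockMatrix (tEntry T (α : ℂ))} :=
    ⟨0, fun b hb => hb.1⟩
  calc toeplitzModulus T ≤ 2 * (d:ℝ) * ω := csInf_le hbdd hmem
    _ = 2 * (d:ℝ) * toeplitzNumRadius T := by rw [hω]
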